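/- Let q be a self-join-free Boolean conjunctive query. If the attack graph of q contains a directed cycle, then it contains a directed cycle of length two (i.e., there exist distinct atoms F, G with F attacks G and G attacks F). -/

import Mathlib

/-- A fact `R(a₁,…,aₙ)`: relation name, primary-key values, non-key values. -/
structure DBFact where
  rel : ℕ
  key : List ℕ
  rest : List ℕ
deriving DecidableEq

/-- Two facts are key-equal if they have the same relation name and primary-key value. -/
def keyEq (A B : DBFact) : Prop := A.rel = B.rel ∧ A.key = B.key

instance (A B : DBFact) : Decidable (keyEq A B) :=
  inferInstanceAs (Decidable (_ ∧ _))

/-- A set of facts is consistent if it contains no two distinct key-equal facts. -/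
def Consistent (s : Finset DBFact) : Prop := ∀ A ∈ s, ∀ B ∈ s, keyEq A B → A = B

/-- A repair of `db` is a maximal (w.r.t. ⊆) consistent subset of `db`. -/
def Repair (db r : Finset DBFact) : Prop :=
  r ⊆ db ∧ Consistent r ∧ ∀ r', r' ⊆ db → Consistent r' → r ⊆ r' → r = r'

/-- A term is a variable (inl) or a constant (inr). -/
abbrev Term := ℕ ⊕ ℕ

/-- An atom `R(t₁,…,tₙ)` with key positions and non-key positions. -/
structure Atom where
  rel : ℕ
  key : List Term
  rest : List Term
deriving DecidableEq

def termVars (l : List Term) : Finset ℕ := (l.filterMap fun t => t.getLeft?).toFinset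

/-- Variables at primary-key positions of an atom. -/
def keyVars (F : Atom) : Finset ℕ := termVars F.key

/-- All variables of an atom. -/
def atomVars (F : Atom) : Finset ℕ := termVars F.key ∪ termVars F.rest

/-- A query (finite set of atoms) is self-join-free: no relation name occurs twice. -/
def SJF (q : Finset Atom) : Prop := ∀ F ∈ q, ∀ G ∈ q, F.rel = G.rel → F = G

/-- Apply a valuation (total map from variables to constants) to an atom, yielding a fact. -/
def applyVal (θ : ℕ → ℕ) (F : Atom) : DBFact :=
  ⟨F.rel, F.key.map (Sum.elim θ id), F.rest.map (Sum.elim θ id)⟩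

/-- Semantic implication of a functional dependency `X → Y` by a set of FDs
(two-tuple semantics, which is equivalent to the standard one for FDs). -/
def FDImplies (fds : Set (Set ℕ × Set ℕ)) (X Y : Set ℕ) : Prop :=
  ∀ θ μ : ℕ → ℕ,
    (∀ p ∈ fds, (∀ v ∈ p.1, θ v = μ v) → ∀ v ∈ p.2, θ v = μ v) →
    (∀ v ∈ X, θ v = μ v) → ∀ v ∈ Y, θ v = μ v

/-- `FD(q) = { key(F) → vars(F) : F ∈ q }`. -/
def FDs (q : Finset Atom) : Set (Set ℕ × Set ℕ) :=
  {p | ∃ F ∈ q, p = ((keyVars F : Set ℕ), (atomVars F : Set ℕ))}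

/-- `F⁺ = { x : FD(q \ {F}) ⊨ key(F) → x }`. -/
def plus (q : Finset Atom) (F : Atom) : Set ℕ :=
  {x | FDImplies (FDs (q.erase F)) (keyVars F : Set ℕ) {x}}

/-- One step of a witness for an attack by `F`: consecutive atoms share a variable outside `F⁺`. -/
def AttackStep (q : Finset Atom) (F : Atom) (A B : Atom) : Prop :=
  ¬ ((atomVars A ∩ atomVars B : Finset ℕ) : Set ℕ) ⊆ plus q F

/-- `F` attacks `G` in the attack graph of `q`. -/
def Attacks (q : Finset Atom) (F G : Atom) : Prop :=
  F ≠ G ∧ F ∈ q ∧ ∃ L : List Atom, (∀ A ∈ L, A ∈ q) ∧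
    List.Chain (AttackStep q F) F L ∧ (F :: L).getLast (List.cons_ne_nil F L) = G

/-- `F` attacks the variable `z`. -/
def AttacksVar (q : Finset Atom) (F : Atom) (z : ℕ) : Prop :=
  z ∉ plus q F ∧ F ∈ q ∧ ∃ L : List Atom, (∀ A ∈ L, A ∈ q) ∧
    List.Chain (AttackStep q F) F L ∧ z ∈ atomVars ((F :: L).getLast (List.cons_ne_nil F L))

/-- `r ⊨ ζ(q)` for a valuation `ζ` over the variable set `X`. -/
def Sat (r : Finset DBFact) (q : Finset Atom) (X : Finset ℕ) (ζ : ℕ → ℕ) : Prop :=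
  ∃ θ : ℕ → ℕ, (∀ v ∈ X, θ v = ζ v) ∧ ∀ F ∈ q, applyVal θ F ∈ r

/-- `r ⊨ q`. -/
def Sat0 (r : Finset DBFact) (q : Finset Atom) : Prop :=
  ∃ θ : ℕ → ℕ, ∀ F ∈ q, applyVal θ F ∈ r

/-- A fact `A` is relevant for `q` in `r` if `A ∈ θ(q) ⊆ r` for some valuation `θ`. -/
def Relevant (A : DBFact) (q : Finset Atom) (r : Finset DBFact) : Prop :=
  ∃ θ : ℕ → ℕ, (∃ F ∈ q, applyVal θ F = A) ∧ ∀ F ∈ q, applyVal θ F ∈ r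

section AttackAux

variable {q : Finset Atom}

lemma keyVars_subset_atomVars (F : Atom) : keyVars F ⊆ atomVars F :=
  Finset.subset_union_left

/-- Extract a witness variable from an attack step. -/
lemma attackStep_exists {F A B : Atom} (h : AttackStep q F A B) :
    ∃ x, x ∈ atomVars A ∧ x ∈ atomVars B ∧ x ∉ plus q F := by
  rw [AttackStep, Set.not_subset] at h
  obtain ⟨x, hx, hxp⟩ := h
  rw [Finset.mem_coe, Finset.mem_inter] at hx
  exact ⟨x, hx.1, hx.2, hxp⟩

lemma attackStep_of_witness {F A B : Atom} {x : ℕ} (h1 : x ∈ atomVars A)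
    (h2 : x ∈ atomVars B) (h3 : x ∉ plus q F) : AttackStep q F A B := by
  rw [AttackStep, Set.not_subset]
  exact ⟨x, by rw [Finset.mem_coe, Finset.mem_inter]; exact ⟨h1, h2⟩, h3⟩

/-- Syntactic closure of `key(F)` under the FDs of `q \ {F}`. -/
inductive InCl (q : Finset Atom) (F : Atom) : ℕ → Prop
  | base {x : ℕ} (hx : x ∈ keyVars F) : InCl q F x
  | step (B : Atom) (hB : B ∈ q.erase F) (hkey : ∀ y ∈ keyVars B, InCl q F y)
      {x : ℕ} (hx : x ∈ atomVars B) : InCl q F x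

lemma incl_plus {F : Atom} {x : ℕ} (h : InCl q F x) : x ∈ plus q F := by
  intro θ μ hfd hkey v hv
  rw [Set.mem_singleton_iff] at hv
  subst hv
  induction h with
  | base hx => exact hkey _ (Finset.mem_coe.2 hx)
  | step B hB hk hx ih =>
      exact hfd ((keyVars B : Set ℕ), (atomVars B : Set ℕ)) ⟨B, hB, rfl⟩
        (fun y hy => ih y (Finset.mem_coe.1 hy)) _ (Finset.mem_coe.2 hx)

lemma plus_incl {F : Atom} {x : ℕ} (h : x ∈ plus q F) : InCl q F x := by
  classical
  have := h (fun _ => 0) (fun v => if InCl q F v then 0 else 1) ?_ ?_ x rfl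
  · by_contra hnc
    simp [hnc] at this
  · rintro p ⟨B, hB, rfl⟩ hprem v hv
    have hk : ∀ y ∈ keyVars B, InCl q F y := by
      intro y hy
      have := hprem y (Finset.mem_coe.2 hy)
      by_contra hny
      simp [hny] at this
    have : InCl q F v := InCl.step B hB hk (Finset.mem_coe.1 hv)
    simp [this]
  · intro v hv
    simp [InCl.base (Finset.mem_coe.1 hv)]

/-- There is a witness path (for attacker `G`) from `G` to `a`. -/
def PathTo (q : Finset Atom) (G a : Atom) : Prop :=
  ∃ L : List Atom, (∀ A ∈ L, A ∈ q) ∧ List.Chain (AttackStep q G) G L ∧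
    (G :: L).getLast (List.cons_ne_nil G L) = a

lemma pathTo_self (G : Atom) : PathTo q G G := ⟨[], by simp, List.Chain.nil, rfl⟩

lemma chain_append' {α : Type*} {r : α → α → Prop} :
    ∀ {L : List α} {a b : α}, List.Chain r a L →
      r ((a :: L).getLast (List.cons_ne_nil a L)) b → List.Chain r a (L ++ [b])
  | [], a, b, _, hr => List.isChain_pair.2 hr
  | c :: L, a, b, h, hr => by
      rw [List.Chain, List.chain_cons] at h
      exact List.chain_cons.2 ⟨h.1, chain_append' h.2 (by
        rwa [List.getLast_cons_cons] at hr)⟩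

lemma pathTo_extend {G a b : Atom} (h : PathTo q G a) (hstep : AttackStep q G a b)
    (hb : b ∈ q) : PathTo q G b := by
  obtain ⟨L, hmem, hchain, hlast⟩ := h
  refine ⟨L ++ [b], ?_, chain_append' hchain (hlast ▸ hstep), ?_⟩
  · intro A hA
    rcases List.mem_append.1 hA with h' | h'
    · exact hmem A h'
    · simp at h'; subst h'; exact hb
  · show (G :: (L ++ [b])).getLast _ = b
    exact List.getLast_append_of_ne_nil (l := G :: L) (l' := [b]) (by simp) (by simp) |>.trans rfl

lemma attacksVar_of_path {G a : Atom} {x : ℕ} (hG : G ∈ q) (h : PathTo q G a)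
    (hx : x ∈ atomVars a) (hxp : x ∉ plus q G) : AttacksVar q G x := by
  obtain ⟨L, hmem, hchain, hlast⟩ := h
  exact ⟨hxp, hG, L, hmem, hchain, hlast ▸ hx⟩

lemma attacks_of_path {G F : Atom} (hG : G ∈ q) (hne : G ≠ F) (h : PathTo q G F) :
    Attacks q G F := by
  obtain ⟨L, hmem, hchain, hlast⟩ := h
  exact ⟨hne, hG, L, hmem, hchain, hlast⟩

lemma chain_last {α : Type*} {r : α → α → Prop} :
    ∀ {L : List α} {a : α}, List.Chain r a L → (h : L ≠ []) → ∃ b, r b (L.getLast h)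
  | [], _, _, h => absurd rfl h
  | c :: L, a, h, _ => by
      rw [List.Chain, List.chain_cons] at h
      rcases L with _ | ⟨d, L⟩
      · exact ⟨a, h.1⟩
      · obtain ⟨b, hb⟩ := chain_last h.2 (List.cons_ne_nil d L)
        exact ⟨b, by rwa [List.getLast_cons_cons]⟩

/-- The last step of a witness path for `F ↝ G` gives a variable of `G` outside `F⁺`. -/
lemma attacks_last_var {F G : Atom} (h : Attacks q F G) :
    ∃ x, x ∈ atomVars G ∧ x ∉ plus q F := by
  obtain ⟨hne, _, L, _, hchain, hlast⟩ := h
  have hL : L ≠ [] := by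
    rintro rfl
    exact hne hlast
  obtain ⟨b, hb⟩ := chain_last hchain hL
  rw [List.getLast_cons hL] at hlast
  rw [hlast] at hb
  obtain ⟨x, _, hx2, hx3⟩ := attackStep_exists hb
  exact ⟨x, hx2, hx3⟩

/-- Key induction: if `G` attacks a variable in the closure of `key(F)` and `F ↝ G`,
then `G ↝ F`. -/
lemma attacksVar_incl_attacks {F G : Atom} (h1 : Attacks q F G) :
    ∀ x, InCl q F x → AttacksVar q G x → Attacks q G F := by
  intro x hx
  induction hx with
  | @base x hxk =>
      rintro ⟨hxp, hGq, L, hmem, hchain, hlastx⟩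
      have hpath : PathTo q G ((G :: L).getLast (List.cons_ne_nil G L)) :=
        ⟨L, hmem, hchain, rfl⟩
      refine attacks_of_path hGq (Ne.symm h1.1) (pathTo_extend hpath ?_ h1.2.1)
      exact attackStep_of_witness hlastx (keyVars_subset_atomVars F hxk) hxp
  | @step B hB hk x hxB ih =>
      rintro hAV
      obtain ⟨hxp, hGq, L, hmem, hchain, hlastx⟩ := hAV
      by_cases hBG : B = G
      · -- then vars(G) ⊆ F⁺, contradicting F ↝ G
        subst hBG
        exfalso
        obtain ⟨y, hy1, hy2⟩ := attacks_last_var h1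
        exact hy2 (incl_plus (InCl.step B hB hk hy1))
      · -- B ≠ G
        by_cases hkG : ∀ y ∈ keyVars B, InCl q G y
        · exact absurd (incl_plus (InCl.step B
            (Finset.mem_erase.2 ⟨hBG, Finset.mem_of_mem_erase hB⟩) hkG hxB)) hxp
        · push_neg at hkG
          obtain ⟨y, hyk, hyn⟩ := hkG
          have hyp : y ∉ plus q G := fun hp => hyn (plus_incl hp)
          have hpath : PathTo q G ((G :: L).getLast (List.cons_ne_nil G L)) :=
            ⟨L, hmem, hchain, rfl⟩
          have hpathB : PathTo q G B :=
            pathTo_extend hpath (attackStep_of_witness hlastx hxB hxp)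
              (Finset.mem_of_mem_erase hB)
          exact ih y hyk (attacksVar_of_path hGq hpathB
            (keyVars_subset_atomVars B hyk) hyp)

/-- Walk along a `G`-witness path: either every step is also an `F`-step, or some
variable attacked by `G` lies in `F⁺`. -/
lemma chain_cases {F G : Atom} (hGq : G ∈ q) :
    ∀ (L : List Atom) (a : Atom), (∀ A ∈ L, A ∈ q) →
      List.Chain (AttackStep q G) a L → PathTo q G a →
      List.Chain (AttackStep q F) a L ∨ ∃ x, x ∈ plus q F ∧ AttacksVar q G x := by
  intro L
  induction L with
  | nil => intro a _ _ _; exact Or.inl List.Chain.nil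
  | cons b L ih =>
      intro a hmem hchain hpath
      rw [List.Chain, List.chain_cons] at hchain
      by_cases hF : AttackStep q F a b
      · have hb : b ∈ q := hmem b (List.mem_cons_self (a := b) (l := L))
        rcases ih b (fun A hA => hmem A (List.mem_cons_of_mem b hA)) hchain.2
            (pathTo_extend hpath hchain.1 hb) with h | h
        · exact Or.inl (List.chain_cons.2 ⟨hF, h⟩)
        · exact Or.inr h
      · rw [AttackStep, Set.not_subset, not_exists] at hF
        obtain ⟨x, hx1, hx2, hx3⟩ := attackStep_exists hchain.1
        have hxF : x ∈ plus q F := by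
          by_contra hc
          exact hF x ⟨by rw [Finset.mem_coe, Finset.mem_inter]; exact ⟨hx1, hx2⟩, hc⟩
        exact Or.inr ⟨x, hxF, attacksVar_of_path hGq hpath hx1 hx3⟩

lemma chain_concat {α : Type*} {r : α → α → Prop} :
    ∀ {L₁ : List α} {L₂ : List α} {a : α}, List.Chain r a L₁ →
      List.Chain r ((a :: L₁).getLast (List.cons_ne_nil a L₁)) L₂ →
      List.Chain r a (L₁ ++ L₂)
  | [], L₂, a, _, h₂ => h₂
  | c :: L₁, L₂, a, h₁, h₂ => by
      rw [List.Chain, List.chain_cons] at h₁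
      rw [List.getLast_cons_cons] at h₂
      exact List.chain_cons.2 ⟨h₁.1, chain_concat h₁.2 h₂⟩

/-- The transitivity-like property of attacks. -/
lemma attacks_trans_or {F G H : Atom} (h1 : Attacks q F G) (h2 : Attacks q G H) :
    Attacks q F H ∨ Attacks q G F := by
  by_cases hFH : F = H
  · subst hFH; exact Or.inr h2
  obtain ⟨hGH, hGq, L₂, hmem₂, hchain₂, hlast₂⟩ := h2
  rcases chain_cases hGq L₂ G hmem₂ hchain₂ (pathTo_self G) with hc | ⟨x, hxF, hAV⟩
  · -- build F ↝ H by concatenation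
    obtain ⟨hFG, hFq, L₁, hmem₁, hchain₁, hlast₁⟩ := h1
    refine Or.inl ⟨hFH, hFq, L₁ ++ L₂, ?_, ?_, ?_⟩
    · intro A hA
      rcases List.mem_append.1 hA with h' | h'
      · exact hmem₁ A h'
      · exact hmem₂ A h'
    · exact chain_concat hchain₁ (hlast₁ ▸ hc)
    · have hL₂ : L₂ ≠ [] := by rintro rfl; exact hGH hlast₂
      have e1 : ((F :: L₁) ++ L₂).getLast (by simp) = L₂.getLast hL₂ :=
        List.getLast_append_of_ne_nil _ hL₂
      have e2 : L₂.getLast hL₂ = (G :: L₂).getLast (List.cons_ne_nil G L₂) :=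
        (List.getLast_cons hL₂).symm
      exact e1.trans (e2.trans hlast₂)
  · exact Or.inr (attacksVar_incl_attacks h1 x (plus_incl hxF) hAV)

end AttackAux

/-- If the attack graph of `q` contains a directed cycle, then it contains a cycle of
length two. -/
theorem cycle_implies_two_cycle (q : Finset Atom) (hq : SJF q)
    (h : ∃ F, Relation.TransGen (Attacks q) F F) :
    ∃ F G, F ≠ G ∧ Attacks q F G ∧ Attacks q G F := by
  obtain ⟨F, hF⟩ := h
  suffices H : ∀ X, Relation.TransGen (Attacks q) F X →
      (∃ F' G', F' ≠ G' ∧ Attacks q F' G' ∧ Attacks q G' F') ∨ Attacks q F X by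
    rcases H F hF with h2 | h2
    · exact h2
    · exact absurd rfl h2.1
  intro X hX
  induction hX with
  | single h1 => exact Or.inr h1
  | tail _ h2 ih =>
      rename_i Y Z _
      rcases ih with hcyc | hFY
      · exact Or.inl hcyc
      · rcases attacks_trans_or hFY h2 with h3 | h3
        · exact Or.inr h3
        · exact Or.inl ⟨F, Y, hFY.1, hFY, h3⟩
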